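/- Let q = 2^m with m ≥ 5 odd. Define B^b_{σ_{5,3},q+1} as the set of 5-subsets B of U_{q+1} such that σ_{5,3}(B − a) = 0 for some a ∈ B. Then (U_{q+1}, B^b_{σ_{5,3},q+1}) is a 4-(q+1, 5, 5) design. -/

import Mathlib

open Finset

attribute [local instance] Classical.propDecidable

/-- The `l`-th elementary symmetric polynomial evaluated on a finite set `B`. -/
noncomputable def esym {F : Type*} [CommRing F] (B : Finset F) (l : ℕ) : F :=
  ∑ s ∈ B.powersetCard l, ∏ x ∈ s, x

/-- The set of `n`-th roots of unity. -/
def rootsSet (F : Type*) [Monoid F] (n : ℕ) : Set F := {u | u ^ n = 1}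

set_option maxHeartbeats 2000000


lemma esym_zero {F : Type*} [CommRing F] (B : Finset F) : esym B 0 = 1 := by
  simp [esym]

lemma esym_empty {F : Type*} [CommRing F] (l : ℕ) : esym (∅ : Finset F) (l+1) = 0 := by
  rw [esym, Finset.powersetCard_eq_empty.2 (by simp), Finset.sum_empty]

lemma esym_insert {F : Type*} [CommRing F] {x : F} {s : Finset F} (h : x ∉ s) (l : ℕ) :
    esym (insert x s) (l+1) = esym s (l+1) + x * esym s l := by
  classical
  unfold esym
  rw [Finset.powersetCard_succ_insert h, Finset.sum_union, Finset.sum_image, Finset.mul_sum]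
  · congr 1
    refine Finset.sum_congr rfl fun t ht => ?_
    rw [Finset.mem_powersetCard] at ht
    rw [Finset.prod_insert (fun hx => h (ht.1 hx))]
  · intro t ht u hu htu
    rw [Finset.mem_coe, Finset.mem_powersetCard] at ht hu
    have hxt : x ∉ t := fun hx => h (ht.1 hx)
    have hxu : x ∉ u := fun hx => h (hu.1 hx)
    have := congrArg (Finset.erase · x) htu
    simpa [Finset.erase_insert hxt, Finset.erase_insert hxu] using this
  · rw [Finset.disjoint_right]
    intro t ht ht'
    rw [Finset.mem_image] at ht
    rw [Finset.mem_powersetCard] at ht'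
    obtain ⟨u, hu, rfl⟩ := ht
    exact h (ht'.1 (Finset.mem_insert_self x u))

section
variable {F : Type*} [CommRing F] {x : F} {s : Finset F}
lemma esym_insert1 (h : x ∉ s) : esym (insert x s) 1 = esym s 1 + x * esym s 0 := esym_insert h 0
lemma esym_insert2 (h : x ∉ s) : esym (insert x s) 2 = esym s 2 + x * esym s 1 := esym_insert h 1
lemma esym_insert3 (h : x ∉ s) : esym (insert x s) 3 = esym s 3 + x * esym s 2 := esym_insert h 2
lemma esym_insert4 (h : x ∉ s) : esym (insert x s) 4 = esym s 4 + x * esym s 3 := esym_insert h 3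
lemma esym_empty1 : esym (∅ : Finset F) 1 = 0 := esym_empty 0
lemma esym_empty2 : esym (∅ : Finset F) 2 = 0 := esym_empty 1
lemma esym_empty3 : esym (∅ : Finset F) 3 = 0 := esym_empty 2
lemma esym_empty4 : esym (∅ : Finset F) 4 = 0 := esym_empty 3
end

lemma esym3_five {F : Type*} [CommRing F] {x a b c d : F} (hxa : x≠a) (hxb : x≠b) (hxc : x≠c)
    (hxd : x≠d) (hab : a≠b) (hac : a≠c) (had : a≠d) (hbc : b≠c) (hbd : b≠d) (hcd : c≠d) :
    esym ({x,a,b,c,d} : Finset F) 3 =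
      x*a*b + x*a*c + x*a*d + x*b*c + x*b*d + x*c*d + a*b*c + a*b*d + a*c*d + b*c*d := by
  have h1 : x ∉ insert a (insert b (insert c (insert d (∅ : Finset F)))) := by
    simp [hxa, hxb, hxc, hxd]
  have h2 : a ∉ insert b (insert c (insert d (∅ : Finset F))) := by simp [hab, hac, had]
  have h3 : b ∉ insert c (insert d (∅ : Finset F)) := by simp [hbc, hbd]
  have h4 : c ∉ insert d (∅ : Finset F) := by simp [hcd]
  have h5 : d ∉ (∅ : Finset F) := by simp
  rw [show ({x,a,b,c,d} : Finset F) =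
      insert x (insert a (insert b (insert c (insert d ∅)))) by rfl]
  simp only [esym_insert1 h1, esym_insert2 h1, esym_insert3 h1, esym_insert4 h1,
    esym_insert1 h2, esym_insert2 h2, esym_insert3 h2, esym_insert4 h2,
    esym_insert1 h3, esym_insert2 h3, esym_insert3 h3, esym_insert4 h3,
    esym_insert1 h4, esym_insert2 h4, esym_insert3 h4, esym_insert4 h4,
    esym_insert1 h5, esym_insert2 h5, esym_insert3 h5, esym_insert4 h5,
    esym_zero, esym_empty1, esym_empty2, esym_empty3, esym_empty4]
  ring

section Core
variable {F : Type*} [Field F] {q : ℕ}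

lemma u_ne_zero {u : F} (hu : u ^ (q+1) = 1) : u ≠ 0 := by
  rintro rfl
  rw [zero_pow (Nat.succ_ne_zero q)] at hu
  exact zero_ne_one hu

lemma u_qinv {u : F} (hu : u ^ (q+1) = 1) : u ^ q = u⁻¹ := by
  have h : u ^ q * u = 1 := by rw [← pow_succ]; exact hu
  exact eq_inv_of_mul_eq_one_left h

lemma add_ne_zero2 (h2 : (2:F) = 0) {u v : F} (h : u ≠ v) : u + v ≠ 0 := fun h0 =>
  h (by linear_combination h0 - v * h2)

lemma eq_of_add_eq_zero2 (h2 : (2:F) = 0) {u v : F} (h : u + v = 0) : u = v := by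
  linear_combination h - v * h2

lemma eq_of_sq_eq_sq2 (h2 : (2:F) = 0) {u v : F} (h : u^2 = v^2) : u = v := by
  have h0 : (u - v)^2 = 0 := by linear_combination h + (v^2 - u*v) * h2
  have := pow_eq_zero_iff (n := 2) (by norm_num) |>.1 h0
  exact sub_eq_zero.1 this

lemma lemA (h2 : (2:F) = 0) (hq : ∀ x y : F, (x+y)^q = x^q + y^q) {a b c d : F} (ha : a^(q+1) = 1) (hb : b^(q+1) = 1) (hc : c^(q+1) = 1) (hd : d^(q+1) = 1)
    (hab : a ≠ b) (hac : a ≠ c) (hbc : b ≠ c) (hbd : b ≠ d) (hcd : c ≠ d) :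
    a + b + c + d ≠ 0 := by
  intro h0
  have ha0 := u_ne_zero ha
  have hb0 := u_ne_zero hb
  have hc0 := u_ne_zero hc
  have hd0 := u_ne_zero hd
  have haq := u_qinv ha
  have hbq := u_qinv hb
  have hcq := u_qinv hc
  have hdq := u_qinv hd
  have hs : a + b ≠ 0 := add_ne_zero2 h2 hab
  have hcdab : c + d = a + b := by linear_combination -h0 + (c+d)*h2
  have h1 : (a+b)^q * (a*b) = a + b := by
    rw [hq, haq, hbq]; field_simp; ring
  have h1' : (c+d)^q * (c*d) = c + d := by
    rw [hq, hcq, hdq]; field_simp; ring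
  rw [hcdab] at h1'
  have hpow : (a+b)^q ≠ 0 := pow_ne_zero _ hs
  have habcd : a*b = c*d := mul_left_cancel₀ hpow (by rw [h1, h1'])
  have key : (c+a)*(c+b) = 0 := by
    linear_combination (-c)*hcdab + habcd + (c^2+c*d)*h2
  rcases mul_eq_zero.1 key with h | h
  · exact hac (eq_of_add_eq_zero2 h2 h).symm
  · exact hbc (eq_of_add_eq_zero2 h2 h).symm

lemma lemLB (h2 : (2:F) = 0) {b c d : F} (hbc : b ≠ c) (hbd : b ≠ d) (hcd : c ≠ d) :
    (b+c+d)*(b*c+b*d+c*d) ≠ b*c*d := by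
  intro h
  have key : (b+c)*((c+d)*(d+b)) = 0 := by linear_combination h
  rcases mul_eq_zero.1 key with h' | h'
  · exact hbc (eq_of_add_eq_zero2 h2 h')
  rcases mul_eq_zero.1 h' with h'' | h''
  · exact hcd (eq_of_add_eq_zero2 h2 h'')
  · exact hbd (eq_of_add_eq_zero2 h2 h'').symm

lemma lemC (h2 : (2:F) = 0) (hq : ∀ x y : F, (x+y)^q = x^q + y^q) {a b c d : F}
    (ha : a^(q+1) = 1) (hb : b^(q+1) = 1) (hc : c^(q+1) = 1) (hd : d^(q+1) = 1)
    (hbc : b ≠ c) (hbd : b ≠ d) (hcd : c ≠ d) :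
    a^2 + (b*c+b*d+c*d) ≠ 0 := by
  intro h
  have ha0 := u_ne_zero ha
  have hb0 := u_ne_zero hb
  have hc0 := u_ne_zero hc
  have hd0 := u_ne_zero hd
  have haq := u_qinv ha
  have hbq := u_qinv hb
  have hcq := u_qinv hc
  have hdq := u_qinv hd
  have h' : a^2 = b*c+b*d+c*d := by linear_combination h - (b*c+b*d+c*d)*h2
  have hfr : (a^2)^q = (b*c+b*d+c*d)^q := congrArg (· ^ q) h'
  rw [pow_right_comm, hq, hq, mul_pow, mul_pow, mul_pow, haq, hbq, hcq, hdq] at hfr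
  field_simp at hfr
  have key : ((b+c+d)*(b*c+b*d+c*d) - b*c*d) * (b*c*d) = 0 := by
    linear_combination (-(b*c*d)*(b+c+d))*h' - (b*c*d)*hfr
  have hbcd : b*c*d ≠ 0 := by simp [hb0, hc0, hd0]
  exact lemLB h2 hbc hbd hcd (sub_eq_zero.1 ((mul_eq_zero.1 key).resolve_right hbcd))

lemma lemD (h2 : (2:F) = 0) (hq : ∀ x y : F, (x+y)^q = x^q + y^q) {a b c d : F}
    (ha : a^(q+1) = 1) (hb : b^(q+1) = 1) (hc : c^(q+1) = 1) (hd : d^(q+1) = 1)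
    (hbc : b ≠ c) (hbd : b ≠ d) (hcd : c ≠ d) :
    b*c*d + a^2*(b+c+d) ≠ 0 := by
  intro h
  have ha0 := u_ne_zero ha
  have hb0 := u_ne_zero hb
  have hc0 := u_ne_zero hc
  have hd0 := u_ne_zero hd
  have haq := u_qinv ha
  have hbq := u_qinv hb
  have hcq := u_qinv hc
  have hdq := u_qinv hd
  have h' : a^2*(b+c+d) = b*c*d := by linear_combination h - (b*c*d)*h2
  have hfr : (a^2*(b+c+d))^q = (b*c*d)^q := congrArg (· ^ q) h'
  rw [mul_pow, pow_right_comm, hq, hq, mul_pow, mul_pow, haq, hbq, hcq, hdq] at hfr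
  field_simp at hfr
  exact lemLB h2 hbc hbd hcd (by linear_combination h' + (b+c+d)*hfr)

lemma lemE (h2 : (2:F) = 0) (hq : ∀ x y : F, (x+y)^q = x^q + y^q) (hqm : ∃ k, q = 3*k+2)
    {a b c d : F}
    (ha : a^(q+1) = 1) (hb : b^(q+1) = 1) (hc : c^(q+1) = 1) (hd : d^(q+1) = 1)
    (hab : a ≠ b) (hac : a ≠ c) (had : a ≠ d) (hbc : b ≠ c) (hbd : b ≠ d) (hcd : c ≠ d) :
    (a*b+a*c+a*d+b*c+b*d+c*d)^2 + (a+b+c+d)*(a*b*c+a*b*d+a*c*d+b*c*d) ≠ 0 := by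
  intro h
  have ha0 := u_ne_zero ha
  have hb0 := u_ne_zero hb
  have hc0 := u_ne_zero hc
  have hd0 := u_ne_zero hd
  have haq := u_qinv ha
  have hbq := u_qinv hb
  have hcq := u_qinv hc
  have hdq := u_qinv hd
  have hq1 : (a+b)*(c+d) ≠ 0 := mul_ne_zero (add_ne_zero2 h2 hab) (add_ne_zero2 h2 hcd)
  have hq2 : (a+c)*(b+d) ≠ 0 := mul_ne_zero (add_ne_zero2 h2 hac) (add_ne_zero2 h2 hbd)
  have hs4 : a*b*c*d ≠ 0 := by simp [ha0, hb0, hc0, hd0]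
  have hZ : ((a+c)*(b+d))^2 + ((a+c)*(b+d))*((a+b)*(c+d)) + ((a+b)*(c+d))^2 = 0 := by
    linear_combination h + ((-1)*a*b^2*d + (-1)*a*c^2*d + (-1)*a^2*b*c + a^2*d^2
      + (-1)*b*c*d^2 + b^2*c^2)*h2
  have hqq1 : ((a+b)*(c+d))^q * (a*b*c*d) = (a+b)*(c+d) := by
    rw [mul_pow, hq, hq, haq, hbq, hcq, hdq]; field_simp; ring
  have hqq2 : ((a+c)*(b+d))^q * (a*b*c*d) = (a+c)*(b+d) := by
    rw [mul_pow, hq, hq, haq, hbq, hcq, hdq]; field_simp; ring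
  set z := (a+c)*(b+d) / ((a+b)*(c+d)) with hzdef
  have hz0 : z ≠ 0 := div_ne_zero hq2 hq1
  have hzq : z^q = z := by
    rw [hzdef, div_pow, div_eq_div_iff (pow_ne_zero _ hq1) hq1]
    refine mul_right_cancel₀ hs4 ?_
    calc ((a+c)*(b+d))^q * ((a+b)*(c+d)) * (a*b*c*d)
        = ((a+c)*(b+d))^q * (a*b*c*d) * ((a+b)*(c+d)) := by ring
      _ = (a+c)*(b+d) * ((a+b)*(c+d)) := by rw [hqq2]
      _ = (a+c)*(b+d) * (((a+b)*(c+d))^q * (a*b*c*d)) := by rw [hqq1]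
      _ = (a+c)*(b+d) * ((a+b)*(c+d))^q * (a*b*c*d) := by ring
  have hz2 : z^2 + z + 1 = 0 := by
    have key : (z^2 + z + 1) * (((a+b)*(c+d))^2)
        = ((a+c)*(b+d))^2 + ((a+c)*(b+d))*((a+b)*(c+d)) + ((a+b)*(c+d))^2 := by
      rw [← div_mul_cancel₀ ((a+c)*(b+d)) hq1, ← hzdef]; ring
    exact (mul_eq_zero.1 (key.trans hZ)).resolve_right (pow_ne_zero _ hq1)
  have hz3 : z^3 = 1 := by linear_combination (z+1)*hz2 - (z^2+z+1)*h2
  obtain ⟨k, hk⟩ := hqm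
  have hzz : z^2 = z := by
    calc z^2 = (z^3)^k * z^2 := by rw [hz3]; simp
      _ = z^(3*k+2) := by rw [← pow_mul, ← pow_add]
      _ = z^q := by rw [hk]
      _ = z := hzq
  have hz1 : z = 1 := by
    have h' : z*z = z*1 := by rw [mul_one]; linear_combination hzz
    exact mul_left_cancel₀ hz0 h'
  rw [hz1] at hz2
  exact one_ne_zero (α := F) (by linear_combination hz2 - h2)

end Core

lemma sub_ne_sub {F : Type*} [CommRing F] {u v t : F} (h : u ≠ v) : u - t ≠ v - t :=
  fun h' => h (by linear_combination h')

lemma cond_eval {F : Type*} [Field F] (h2 : (2:F) = 0) {x a b c d : F} (t : F)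
    (hxa : x≠a) (hxb : x≠b) (hxc : x≠c) (hxd : x≠d) (hab : a≠b) (hac : a≠c) (had : a≠d)
    (hbc : b≠c) (hbd : b≠d) (hcd : c≠d) :
    esym (({x,a,b,c,d} : Finset F).image (fun z => z - t)) 3 =
      (a*b*c+a*b*d+a*c*d+b*c*d) + x*(a*b+a*c+a*d+b*c+b*d+c*d)
        + t*((a*b+a*c+a*d+b*c+b*d+c*d) + x*(a+b+c+d)) := by
  classical
  have key : ({x,a,b,c,d} : Finset F).image (fun z => z - t) = {x-t, a-t, b-t, c-t, d-t} := by
    simp [Finset.image_insert]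
  rw [key, esym3_five (sub_ne_sub hxa) (sub_ne_sub hxb) (sub_ne_sub hxc) (sub_ne_sub hxd)
    (sub_ne_sub hab) (sub_ne_sub hac) (sub_ne_sub had) (sub_ne_sub hbc) (sub_ne_sub hbd)
    (sub_ne_sub hcd)]
  linear_combination ((-2)*a*b*t + (-2)*a*c*t + (-2)*a*d*t + (-2)*a*t*x + 3*a*t^2
    + (-2)*b*c*t + (-2)*b*d*t + (-2)*b*t*x + 3*b*t^2 + (-2)*c*d*t + (-2)*c*t*x + 3*c*t^2
    + (-2)*d*t*x + 3*d*t^2 + 3*t^2*x + (-5)*t^3) * h2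

lemma insert_ne_insert {F : Type*} [DecidableEq F] {E : Finset F} {x y : F}
    (hx : x ∉ E) (hxy : x ≠ y) : insert x E ≠ insert y E := by
  intro h
  have hxmem : x ∈ insert y E := h ▸ Finset.mem_insert_self x E
  rcases Finset.mem_insert.1 hxmem with h' | h'
  · exact hxy h'
  · exact hx h'

theorem stmt13 (m : ℕ) (hm : 5 ≤ m) (hodd : Odd m)
    (E : Finset (GaloisField 2 (2 * m)))
    (hEU : ↑E ⊆ rootsSet (GaloisField 2 (2 * m)) (2 ^ m + 1))
    (hE : E.card = 4) :
    {B : Finset (GaloisField 2 (2 * m)) |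
        ↑B ⊆ rootsSet (GaloisField 2 (2 * m)) (2 ^ m + 1) ∧ B.card = 5 ∧
          (∃ a ∈ B, esym (B.image (fun b => b - a)) 3 = 0) ∧ E ⊆ B}.ncard = 5 := by
  classical
  have hm2 : 2*m ≠ 0 := by omega
  have h2 : (2 : GaloisField 2 (2*m)) = 0 := by
    have h := CharP.cast_eq_zero (GaloisField 2 (2*m)) 2
    exact_mod_cast h
  have hq : ∀ x y : GaloisField 2 (2*m), (x+y)^(2^m) = x^(2^m) + y^(2^m) :=
    fun x y => add_pow_char_pow x y 2 m
  have hqm : ∃ k, 2^m = 3*k+2 := by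
    obtain ⟨j, rfl⟩ := hodd
    have h4 : ∀ j : ℕ, ∃ t, 4^j = 3*t+1 := by
      intro j
      induction j with
      | zero => exact ⟨0, rfl⟩
      | succ n ih => obtain ⟨t, ht⟩ := ih; exact ⟨4*t+1, by rw [pow_succ, ht]; ring⟩
    obtain ⟨t, ht⟩ := h4 j
    have he : 2^(2*j+1) = 4^j*2 := by rw [pow_succ, pow_mul]; norm_num
    exact ⟨2*t, by rw [he, ht]; ring⟩
  haveI : Fintype (GaloisField 2 (2*m)) := Fintype.ofFinite _
  have hcard : Fintype.card (GaloisField 2 (2*m)) = 2^(2*m) := by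
    rw [← Nat.card_eq_fintype_card]; exact GaloisField.card 2 (2*m) hm2
  have hqcard : ∀ r : GaloisField 2 (2*m), r^(2^(2*m)) = r := by
    intro r; rw [← hcard]; exact FiniteField.pow_card r
  rw [show (4:ℕ) = 3+1 from rfl, Finset.card_eq_succ] at hE
  obtain ⟨a, t4, hat, hEt, ht3⟩ := hE
  obtain ⟨b, c, d, hbc, hbd, hcd, rfl⟩ := Finset.card_eq_three.1 ht3
  subst hEt
  have hab : a ≠ b := fun h => hat (by simp [h])
  have hac : a ≠ c := fun h => hat (by simp [h])
  have had : a ≠ d := fun h => hat (by simp [h])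
  have hE : (insert a ({b,c,d} : Finset (GaloisField 2 (2*m)))).card = 4 := by
    rw [Finset.card_insert_of_notMem hat, Finset.card_insert_of_notMem (by simp [hbc, hbd]),
      Finset.card_insert_of_notMem (by simp [hcd]), Finset.card_singleton]
  have ha : a^(2^m+1) = 1 := hEU (by simp)
  have hb : b^(2^m+1) = 1 := hEU (by simp)
  have hc : c^(2^m+1) = 1 := hEU (by simp)
  have hd : d^(2^m+1) = 1 := hEU (by simp)
  have ha0 := u_ne_zero ha
  have hb0 := u_ne_zero hb
  have hc0 := u_ne_zero hc
  have hd0 := u_ne_zero hd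
  have hqa : a^(2^m) * a = 1 := by rw [← pow_succ]; exact ha
  have hqb : b^(2^m) * b = 1 := by rw [← pow_succ]; exact hb
  have hqc : c^(2^m) * c = 1 := by rw [← pow_succ]; exact hc
  have hqd : d^(2^m) * d = 1 := by rw [← pow_succ]; exact hd
  have haq := u_qinv ha
  have hbq := u_qinv hb
  have hcq := u_qinv hc
  have hdq := u_qinv hd
  have hs4 : (a*b*c*d) ≠ 0 := by simp [ha0, hb0, hc0, hd0]
  have hs1 : (a+b+c+d) ≠ 0 := lemA h2 hq ha hb hc hd hab hac hbc hbd hcd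
  have hs3 : (a*b*c+a*b*d+a*c*d+b*c*d) ≠ 0 := by
    have hiU : ∀ u : GaloisField 2 (2*m), u^(2^m+1) = 1 → (u⁻¹)^(2^m+1) = 1 := by
      intro u hu; rw [inv_pow, hu, inv_one]
    have hkey := lemA h2 hq (hiU a ha) (hiU b hb) (hiU c hc) (hiU d hd)
      (fun h => hab (inv_injective h)) (fun h => hac (inv_injective h))
      (fun h => hbc (inv_injective h)) (fun h => hbd (inv_injective h))
      (fun h => hcd (inv_injective h))
    intro h0
    apply hkey
    field_simp
    linear_combination h0
  have hDa : (a*b+a*c+a*d+b*c+b*d+c*d) + a*(a+b+c+d) ≠ 0 := by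
    intro h
    exact lemC h2 hq ha hb hc hd hbc hbd hcd
      (by linear_combination h - (a*b+a*c+a*d)*h2)
  have hNa : (a*b*c+a*b*d+a*c*d+b*c*d) + a*(a*b+a*c+a*d+b*c+b*d+c*d) ≠ 0 := by
    intro h
    exact lemD h2 hq ha hb hc hd hbc hbd hcd
      (by linear_combination h - (a*b*c+a*b*d+a*c*d)*h2)
  have hZa : (a*b*c+a*b*d+a*c*d+b*c*d) + a^2*(a+b+c+d) ≠ 0 := by
    have hid : (a*b*c+a*b*d+a*c*d+b*c*d) + a^2*(a+b+c+d) = (a+b)*((a+c)*(a+d)) := by ring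
    rw [hid]
    exact mul_ne_zero (add_ne_zero2 h2 hab) (mul_ne_zero
      (add_ne_zero2 h2 hac) (add_ne_zero2 h2 had))
  have hDb : (a*b+a*c+a*d+b*c+b*d+c*d) + b*(a+b+c+d) ≠ 0 := by
    intro h
    exact lemC h2 hq hb ha hc hd hac had hcd
      (by linear_combination h - (b*a+b*c+b*d)*h2)
  have hNb : (a*b*c+a*b*d+a*c*d+b*c*d) + b*(a*b+a*c+a*d+b*c+b*d+c*d) ≠ 0 := by
    intro h
    exact lemD h2 hq hb ha hc hd hac had hcd
      (by linear_combination h - (b*a*c+b*a*d+b*c*d)*h2)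
  have hZb : (a*b*c+a*b*d+a*c*d+b*c*d) + b^2*(a+b+c+d) ≠ 0 := by
    have hid : (a*b*c+a*b*d+a*c*d+b*c*d) + b^2*(a+b+c+d) = (b+a)*((b+c)*(b+d)) := by ring
    rw [hid]
    exact mul_ne_zero (add_ne_zero2 h2 (Ne.symm hab)) (mul_ne_zero
      (add_ne_zero2 h2 hbc) (add_ne_zero2 h2 hbd))
  have hDc : (a*b+a*c+a*d+b*c+b*d+c*d) + c*(a+b+c+d) ≠ 0 := by
    intro h
    exact lemC h2 hq hc ha hb hd hab had hbd
      (by linear_combination h - (c*a+c*b+c*d)*h2)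
  have hNc : (a*b*c+a*b*d+a*c*d+b*c*d) + c*(a*b+a*c+a*d+b*c+b*d+c*d) ≠ 0 := by
    intro h
    exact lemD h2 hq hc ha hb hd hab had hbd
      (by linear_combination h - (c*a*b+c*a*d+c*b*d)*h2)
  have hZc : (a*b*c+a*b*d+a*c*d+b*c*d) + c^2*(a+b+c+d) ≠ 0 := by
    have hid : (a*b*c+a*b*d+a*c*d+b*c*d) + c^2*(a+b+c+d) = (c+a)*((c+b)*(c+d)) := by ring
    rw [hid]
    exact mul_ne_zero (add_ne_zero2 h2 (Ne.symm hac)) (mul_ne_zero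
      (add_ne_zero2 h2 (Ne.symm hbc)) (add_ne_zero2 h2 hcd))
  have hDd : (a*b+a*c+a*d+b*c+b*d+c*d) + d*(a+b+c+d) ≠ 0 := by
    intro h
    exact lemC h2 hq hd ha hb hc hab hac hbc
      (by linear_combination h - (d*a+d*b+d*c)*h2)
  have hNd : (a*b*c+a*b*d+a*c*d+b*c*d) + d*(a*b+a*c+a*d+b*c+b*d+c*d) ≠ 0 := by
    intro h
    exact lemD h2 hq hd ha hb hc hab hac hbc
      (by linear_combination h - (d*a*b+d*a*c+d*b*c)*h2)
  have hZd : (a*b*c+a*b*d+a*c*d+b*c*d) + d^2*(a+b+c+d) ≠ 0 := by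
    have hid : (a*b*c+a*b*d+a*c*d+b*c*d) + d^2*(a+b+c+d) = (d+a)*((d+b)*(d+c)) := by ring
    rw [hid]
    exact mul_ne_zero (add_ne_zero2 h2 (Ne.symm had)) (mul_ne_zero
      (add_ne_zero2 h2 (Ne.symm hbd)) (add_ne_zero2 h2 (Ne.symm hcd)))
  have hE5 : (a*b+a*c+a*d+b*c+b*d+c*d)^2 + (a+b+c+d)*(a*b*c+a*b*d+a*c*d+b*c*d) ≠ 0 :=
    lemE h2 hq hqm ha hb hc hd hab hac had hbc hbd hcd
  set x0 : GaloisField 2 (2*m) := ((a*b*c+a*b*d+a*c*d+b*c*d) / (a+b+c+d)) ^ (2^(2*m-1)) with hx0def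
  have hexp : 2^(2*m-1)*2 = 2^(2*m) := by
    rw [← pow_succ]; congr 1; omega
  have hx0sq : x0^2 = (a*b*c+a*b*d+a*c*d+b*c*d) / (a+b+c+d) := by
    rw [hx0def, ← pow_mul, hexp, hqcard]
  have k3 : (a*b*c+a*b*d+a*c*d+b*c*d)^(2^m) * (a*b*c*d) = (a+b+c+d) := by
    simp only [hq, mul_pow]
    linear_combination ((b^(2^m))*(c^(2^m))*b*c*d + (b^(2^m))*(d^(2^m))*b*c*d + (c^(2^m))*(d^(2^m))*b*c*d)*hqa + ((c^(2^m))*(d^(2^m))*a*c*d + (c^(2^m))*c*d + (d^(2^m))*c*d)*hqb + ((d^(2^m))*a*d + (d^(2^m))*b*d + d)*hqc + (a + b + c)*hqd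
  have k1 : (a+b+c+d)^(2^m) * (a*b*c*d) = (a*b*c+a*b*d+a*c*d+b*c*d) := by
    simp only [hq, mul_pow]
    linear_combination (b*c*d)*hqa + (a*c*d)*hqb + (a*b*d)*hqc + (a*b*c)*hqd
  have key13 : (a*b*c+a*b*d+a*c*d+b*c*d)^(2^m+1) = (a+b+c+d)^(2^m+1) := by
    refine mul_right_cancel₀ hs4 ?_
    calc (a*b*c+a*b*d+a*c*d+b*c*d)^(2^m+1) * (a*b*c*d) = ((a*b*c+a*b*d+a*c*d+b*c*d)^(2^m) * (a*b*c*d)) * (a*b*c+a*b*d+a*c*d+b*c*d) := by rw [pow_succ]; ring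
      _ = (a+b+c+d) * (a*b*c+a*b*d+a*c*d+b*c*d) := by rw [k3]
      _ = ((a+b+c+d)^(2^m) * (a*b*c*d)) * (a+b+c+d) := by rw [k1]; ring
      _ = (a+b+c+d)^(2^m+1) * (a*b*c*d) := by rw [pow_succ]; ring
  have hrU : (((a*b*c+a*b*d+a*c*d+b*c*d) / (a+b+c+d)) : GaloisField 2 (2*m))^(2^m+1) = 1 := by
    rw [div_pow, key13, div_self (pow_ne_zero _ hs1)]
  have hx0U : x0^(2^m+1) = 1 := by
    rw [hx0def, ← pow_mul, mul_comm (2^(2*m-1)) (2^m+1), pow_mul, hrU, one_pow]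
  have hx0s1 : x0^2 * (a+b+c+d) = (a*b*c+a*b*d+a*c*d+b*c*d) := by
    rw [hx0sq, div_mul_cancel₀ _ hs1]
  set xa : GaloisField 2 (2*m) := ((a*b*c+a*b*d+a*c*d+b*c*d) + a*(a*b+a*c+a*d+b*c+b*d+c*d)) / ((a*b+a*c+a*d+b*c+b*d+c*d) + a*(a+b+c+d)) with hxadef
  have kNa : ((a*b*c+a*b*d+a*c*d+b*c*d) + a*(a*b+a*c+a*d+b*c+b*d+c*d))^(2^m) * ((a*b*c*d)*a) = ((a*b+a*c+a*d+b*c+b*d+c*d) + a*(a+b+c+d)) := by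
    simp only [hq, mul_pow]
    linear_combination ((a^(2^m))*(b^(2^m))*a*b*c*d + (a^(2^m))*(c^(2^m))*a*b*c*d + (a^(2^m))*(d^(2^m))*a*b*c*d + (2)*(b^(2^m))*(c^(2^m))*a*b*c*d + (2)*(b^(2^m))*(d^(2^m))*a*b*c*d + (b^(2^m))*b*c*d + (2)*(c^(2^m))*(d^(2^m))*a*b*c*d + (c^(2^m))*b*c*d + (d^(2^m))*b*c*d)*hqa + ((c^(2^m))*(d^(2^m))*a^2*c*d + (2)*(c^(2^m))*a*c*d + (2)*(d^(2^m))*a*c*d + c*d)*hqb + ((2)*(d^(2^m))*a*b*d + (d^(2^m))*a^2*d + (2)*a*d + b*d)*hqc + ((2)*a*b + (2)*a*c + a^2 + b*c)*hqd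
  have kDa : ((a*b+a*c+a*d+b*c+b*d+c*d) + a*(a+b+c+d))^(2^m) * ((a*b*c*d)*a) = ((a*b*c+a*b*d+a*c*d+b*c*d) + a*(a*b+a*c+a*d+b*c+b*d+c*d)) := by
    simp only [hq, mul_pow]
    linear_combination ((a^(2^m))*a*b*c*d + (2)*(b^(2^m))*a*b*c*d + (2)*(c^(2^m))*a*b*c*d + (2)*(d^(2^m))*a*b*c*d + b*c*d)*hqa + ((c^(2^m))*a^2*c*d + (d^(2^m))*a^2*c*d + (2)*a*c*d)*hqb + ((d^(2^m))*a^2*b*d + (2)*a*b*d + a^2*d)*hqc + ((2)*a*b*c + a^2*b + a^2*c)*hqd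
  have keyNDa : ((a*b*c+a*b*d+a*c*d+b*c*d) + a*(a*b+a*c+a*d+b*c+b*d+c*d))^(2^m+1) = ((a*b+a*c+a*d+b*c+b*d+c*d) + a*(a+b+c+d))^(2^m+1) := by
    refine mul_right_cancel₀ (mul_ne_zero hs4 ha0) ?_
    calc ((a*b*c+a*b*d+a*c*d+b*c*d) + a*(a*b+a*c+a*d+b*c+b*d+c*d))^(2^m+1) * ((a*b*c*d)*a) = (((a*b*c+a*b*d+a*c*d+b*c*d) + a*(a*b+a*c+a*d+b*c+b*d+c*d))^(2^m) * ((a*b*c*d)*a)) * ((a*b*c+a*b*d+a*c*d+b*c*d) + a*(a*b+a*c+a*d+b*c+b*d+c*d)) := by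
          rw [pow_succ]; ring
      _ = ((a*b+a*c+a*d+b*c+b*d+c*d) + a*(a+b+c+d)) * ((a*b*c+a*b*d+a*c*d+b*c*d) + a*(a*b+a*c+a*d+b*c+b*d+c*d)) := by rw [kNa]
      _ = (((a*b+a*c+a*d+b*c+b*d+c*d) + a*(a+b+c+d))^(2^m) * ((a*b*c*d)*a)) * ((a*b+a*c+a*d+b*c+b*d+c*d) + a*(a+b+c+d)) := by rw [kDa]; ring
      _ = ((a*b+a*c+a*d+b*c+b*d+c*d) + a*(a+b+c+d))^(2^m+1) * ((a*b*c*d)*a) := by rw [pow_succ]; ring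
  have hxaU : xa^(2^m+1) = 1 := by
    rw [hxadef, div_pow, keyNDa, div_self (pow_ne_zero _ hDa)]
  have hxamul : xa * ((a*b+a*c+a*d+b*c+b*d+c*d) + a*(a+b+c+d)) = ((a*b*c+a*b*d+a*c*d+b*c*d) + a*(a*b+a*c+a*d+b*c+b*d+c*d)) := by
    rw [hxadef, div_mul_cancel₀ _ hDa]
  set xb : GaloisField 2 (2*m) := ((a*b*c+a*b*d+a*c*d+b*c*d) + b*(a*b+a*c+a*d+b*c+b*d+c*d)) / ((a*b+a*c+a*d+b*c+b*d+c*d) + b*(a+b+c+d)) with hxbdef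
  have kNb : ((a*b*c+a*b*d+a*c*d+b*c*d) + b*(a*b+a*c+a*d+b*c+b*d+c*d))^(2^m) * ((a*b*c*d)*b) = ((a*b+a*c+a*d+b*c+b*d+c*d) + b*(a+b+c+d)) := by
    simp only [hq, mul_pow]
    linear_combination ((2)*(b^(2^m))*(c^(2^m))*b^2*c*d + (2)*(b^(2^m))*(d^(2^m))*b^2*c*d + (b^(2^m))^2*b^2*c*d + (c^(2^m))*(d^(2^m))*b^2*c*d)*hqa + ((b^(2^m))*(c^(2^m))*a*b*c*d + (b^(2^m))*(d^(2^m))*a*b*c*d + (b^(2^m))*b*c*d + (2)*(c^(2^m))*(d^(2^m))*a*b*c*d + (c^(2^m))*a*c*d + (2)*(c^(2^m))*b*c*d + (d^(2^m))*a*c*d + (2)*(d^(2^m))*b*c*d + c*d)*hqb + ((2)*(d^(2^m))*a*b*d + (d^(2^m))*b^2*d + a*d + (2)*b*d)*hqc + ((2)*a*b + a*c + (2)*b*c + b^2)*hqd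
  have kDb : ((a*b+a*c+a*d+b*c+b*d+c*d) + b*(a+b+c+d))^(2^m) * ((a*b*c*d)*b) = ((a*b*c+a*b*d+a*c*d+b*c*d) + b*(a*b+a*c+a*d+b*c+b*d+c*d)) := by
    simp only [hq, mul_pow]
    linear_combination ((2)*(b^(2^m))*b^2*c*d + (c^(2^m))*b^2*c*d + (d^(2^m))*b^2*c*d)*hqa + ((b^(2^m))*a*b*c*d + (2)*(c^(2^m))*a*b*c*d + (2)*(d^(2^m))*a*b*c*d + a*c*d + (2)*b*c*d)*hqb + ((d^(2^m))*a*b^2*d + (2)*a*b*d + b^2*d)*hqc + ((2)*a*b*c + a*b^2 + b^2*c)*hqd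
  have keyNDb : ((a*b*c+a*b*d+a*c*d+b*c*d) + b*(a*b+a*c+a*d+b*c+b*d+c*d))^(2^m+1) = ((a*b+a*c+a*d+b*c+b*d+c*d) + b*(a+b+c+d))^(2^m+1) := by
    refine mul_right_cancel₀ (mul_ne_zero hs4 hb0) ?_
    calc ((a*b*c+a*b*d+a*c*d+b*c*d) + b*(a*b+a*c+a*d+b*c+b*d+c*d))^(2^m+1) * ((a*b*c*d)*b) = (((a*b*c+a*b*d+a*c*d+b*c*d) + b*(a*b+a*c+a*d+b*c+b*d+c*d))^(2^m) * ((a*b*c*d)*b)) * ((a*b*c+a*b*d+a*c*d+b*c*d) + b*(a*b+a*c+a*d+b*c+b*d+c*d)) := by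
          rw [pow_succ]; ring
      _ = ((a*b+a*c+a*d+b*c+b*d+c*d) + b*(a+b+c+d)) * ((a*b*c+a*b*d+a*c*d+b*c*d) + b*(a*b+a*c+a*d+b*c+b*d+c*d)) := by rw [kNb]
      _ = (((a*b+a*c+a*d+b*c+b*d+c*d) + b*(a+b+c+d))^(2^m) * ((a*b*c*d)*b)) * ((a*b+a*c+a*d+b*c+b*d+c*d) + b*(a+b+c+d)) := by rw [kDb]; ring
      _ = ((a*b+a*c+a*d+b*c+b*d+c*d) + b*(a+b+c+d))^(2^m+1) * ((a*b*c*d)*b) := by rw [pow_succ]; ring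
  have hxbU : xb^(2^m+1) = 1 := by
    rw [hxbdef, div_pow, keyNDb, div_self (pow_ne_zero _ hDb)]
  have hxbmul : xb * ((a*b+a*c+a*d+b*c+b*d+c*d) + b*(a+b+c+d)) = ((a*b*c+a*b*d+a*c*d+b*c*d) + b*(a*b+a*c+a*d+b*c+b*d+c*d)) := by
    rw [hxbdef, div_mul_cancel₀ _ hDb]
  set xc : GaloisField 2 (2*m) := ((a*b*c+a*b*d+a*c*d+b*c*d) + c*(a*b+a*c+a*d+b*c+b*d+c*d)) / ((a*b+a*c+a*d+b*c+b*d+c*d) + c*(a+b+c+d)) with hxcdef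
  have kNc : ((a*b*c+a*b*d+a*c*d+b*c*d) + c*(a*b+a*c+a*d+b*c+b*d+c*d))^(2^m) * ((a*b*c*d)*c) = ((a*b+a*c+a*d+b*c+b*d+c*d) + c*(a+b+c+d)) := by
    simp only [hq, mul_pow]
    linear_combination ((2)*(b^(2^m))*(c^(2^m))*b*c^2*d + (b^(2^m))*(d^(2^m))*b*c^2*d + (2)*(c^(2^m))*(d^(2^m))*b*c^2*d + (c^(2^m))^2*b*c^2*d)*hqa + ((2)*(c^(2^m))*(d^(2^m))*a*c^2*d + (2)*(c^(2^m))*c^2*d + (c^(2^m))^2*a*c^2*d + (d^(2^m))*c^2*d)*hqb + ((c^(2^m))*(d^(2^m))*a*b*c*d + (c^(2^m))*a*c*d + (c^(2^m))*b*c*d + (d^(2^m))*a*b*d + (2)*(d^(2^m))*a*c*d + (2)*(d^(2^m))*b*c*d + a*d + b*d + (2)*c*d)*hqc + (a*b + (2)*a*c + (2)*b*c + c^2)*hqd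
  have kDc : ((a*b+a*c+a*d+b*c+b*d+c*d) + c*(a+b+c+d))^(2^m) * ((a*b*c*d)*c) = ((a*b*c+a*b*d+a*c*d+b*c*d) + c*(a*b+a*c+a*d+b*c+b*d+c*d)) := by
    simp only [hq, mul_pow]
    linear_combination ((b^(2^m))*b*c^2*d + (2)*(c^(2^m))*b*c^2*d + (d^(2^m))*b*c^2*d)*hqa + ((2)*(c^(2^m))*a*c^2*d + (d^(2^m))*a*c^2*d + c^2*d)*hqb + ((c^(2^m))*a*b*c*d + (2)*(d^(2^m))*a*b*c*d + a*b*d + (2)*a*c*d + (2)*b*c*d)*hqc + ((2)*a*b*c + a*c^2 + b*c^2)*hqd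
  have keyNDc : ((a*b*c+a*b*d+a*c*d+b*c*d) + c*(a*b+a*c+a*d+b*c+b*d+c*d))^(2^m+1) = ((a*b+a*c+a*d+b*c+b*d+c*d) + c*(a+b+c+d))^(2^m+1) := by
    refine mul_right_cancel₀ (mul_ne_zero hs4 hc0) ?_
    calc ((a*b*c+a*b*d+a*c*d+b*c*d) + c*(a*b+a*c+a*d+b*c+b*d+c*d))^(2^m+1) * ((a*b*c*d)*c) = (((a*b*c+a*b*d+a*c*d+b*c*d) + c*(a*b+a*c+a*d+b*c+b*d+c*d))^(2^m) * ((a*b*c*d)*c)) * ((a*b*c+a*b*d+a*c*d+b*c*d) + c*(a*b+a*c+a*d+b*c+b*d+c*d)) := by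
          rw [pow_succ]; ring
      _ = ((a*b+a*c+a*d+b*c+b*d+c*d) + c*(a+b+c+d)) * ((a*b*c+a*b*d+a*c*d+b*c*d) + c*(a*b+a*c+a*d+b*c+b*d+c*d)) := by rw [kNc]
      _ = (((a*b+a*c+a*d+b*c+b*d+c*d) + c*(a+b+c+d))^(2^m) * ((a*b*c*d)*c)) * ((a*b+a*c+a*d+b*c+b*d+c*d) + c*(a+b+c+d)) := by rw [kDc]; ring
      _ = ((a*b+a*c+a*d+b*c+b*d+c*d) + c*(a+b+c+d))^(2^m+1) * ((a*b*c*d)*c) := by rw [pow_succ]; ring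
  have hxcU : xc^(2^m+1) = 1 := by
    rw [hxcdef, div_pow, keyNDc, div_self (pow_ne_zero _ hDc)]
  have hxcmul : xc * ((a*b+a*c+a*d+b*c+b*d+c*d) + c*(a+b+c+d)) = ((a*b*c+a*b*d+a*c*d+b*c*d) + c*(a*b+a*c+a*d+b*c+b*d+c*d)) := by
    rw [hxcdef, div_mul_cancel₀ _ hDc]
  set xd : GaloisField 2 (2*m) := ((a*b*c+a*b*d+a*c*d+b*c*d) + d*(a*b+a*c+a*d+b*c+b*d+c*d)) / ((a*b+a*c+a*d+b*c+b*d+c*d) + d*(a+b+c+d)) with hxddef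
  have kNd : ((a*b*c+a*b*d+a*c*d+b*c*d) + d*(a*b+a*c+a*d+b*c+b*d+c*d))^(2^m) * ((a*b*c*d)*d) = ((a*b+a*c+a*d+b*c+b*d+c*d) + d*(a+b+c+d)) := by
    simp only [hq, mul_pow]
    linear_combination ((b^(2^m))*(c^(2^m))*b*c*d^2 + (2)*(b^(2^m))*(d^(2^m))*b*c*d^2 + (2)*(c^(2^m))*(d^(2^m))*b*c*d^2 + (d^(2^m))^2*b*c*d^2)*hqa + ((2)*(c^(2^m))*(d^(2^m))*a*c*d^2 + (c^(2^m))*c*d^2 + (2)*(d^(2^m))*c*d^2 + (d^(2^m))^2*a*c*d^2)*hqb + ((2)*(d^(2^m))*a*d^2 + (2)*(d^(2^m))*b*d^2 + (d^(2^m))^2*a*b*d^2 + d^2)*hqc + ((d^(2^m))*a*b*d + (d^(2^m))*a*c*d + (d^(2^m))*b*c*d + a*b + a*c + (2)*a*d + b*c + (2)*b*d + (2)*c*d)*hqd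
  have kDd : ((a*b+a*c+a*d+b*c+b*d+c*d) + d*(a+b+c+d))^(2^m) * ((a*b*c*d)*d) = ((a*b*c+a*b*d+a*c*d+b*c*d) + d*(a*b+a*c+a*d+b*c+b*d+c*d)) := by
    simp only [hq, mul_pow]
    linear_combination ((b^(2^m))*b*c*d^2 + (c^(2^m))*b*c*d^2 + (2)*(d^(2^m))*b*c*d^2)*hqa + ((c^(2^m))*a*c*d^2 + (2)*(d^(2^m))*a*c*d^2 + c*d^2)*hqb + ((2)*(d^(2^m))*a*b*d^2 + a*d^2 + b*d^2)*hqc + ((d^(2^m))*a*b*c*d + a*b*c + (2)*a*b*d + (2)*a*c*d + (2)*b*c*d)*hqd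
  have keyNDd : ((a*b*c+a*b*d+a*c*d+b*c*d) + d*(a*b+a*c+a*d+b*c+b*d+c*d))^(2^m+1) = ((a*b+a*c+a*d+b*c+b*d+c*d) + d*(a+b+c+d))^(2^m+1) := by
    refine mul_right_cancel₀ (mul_ne_zero hs4 hd0) ?_
    calc ((a*b*c+a*b*d+a*c*d+b*c*d) + d*(a*b+a*c+a*d+b*c+b*d+c*d))^(2^m+1) * ((a*b*c*d)*d) = (((a*b*c+a*b*d+a*c*d+b*c*d) + d*(a*b+a*c+a*d+b*c+b*d+c*d))^(2^m) * ((a*b*c*d)*d)) * ((a*b*c+a*b*d+a*c*d+b*c*d) + d*(a*b+a*c+a*d+b*c+b*d+c*d)) := by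
          rw [pow_succ]; ring
      _ = ((a*b+a*c+a*d+b*c+b*d+c*d) + d*(a+b+c+d)) * ((a*b*c+a*b*d+a*c*d+b*c*d) + d*(a*b+a*c+a*d+b*c+b*d+c*d)) := by rw [kNd]
      _ = (((a*b+a*c+a*d+b*c+b*d+c*d) + d*(a+b+c+d))^(2^m) * ((a*b*c*d)*d)) * ((a*b+a*c+a*d+b*c+b*d+c*d) + d*(a+b+c+d)) := by rw [kDd]; ring
      _ = ((a*b+a*c+a*d+b*c+b*d+c*d) + d*(a+b+c+d))^(2^m+1) * ((a*b*c*d)*d) := by rw [pow_succ]; ring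
  have hxdU : xd^(2^m+1) = 1 := by
    rw [hxddef, div_pow, keyNDd, div_self (pow_ne_zero _ hDd)]
  have hxdmul : xd * ((a*b+a*c+a*d+b*c+b*d+c*d) + d*(a+b+c+d)) = ((a*b*c+a*b*d+a*c*d+b*c*d) + d*(a*b+a*c+a*d+b*c+b*d+c*d)) := by
    rw [hxddef, div_mul_cancel₀ _ hDd]
  have hxa_a : xa ≠ a := by
    intro h
    rw [hxadef, div_eq_iff hDa] at h
    exact hZa (by linear_combination h + a^2*(a+b+c+d)*h2)
  have hxa_b : xa ≠ b := by
    intro h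
    rw [hxadef, div_eq_iff hDa] at h
    have key : (a+b)^2*(c+d) = 0 := by
      linear_combination h + (a*b*c + a*b*d + a*b^2 + (-1)*a*c*d + b^2*c + b^2*d)*h2
    exact (mul_ne_zero (pow_ne_zero 2 (add_ne_zero2 h2 hab))
      (add_ne_zero2 h2 hcd)) key
  have hxa_c : xa ≠ c := by
    intro h
    rw [hxadef, div_eq_iff hDa] at h
    have key : (a+c)^2*(b+d) = 0 := by
      linear_combination h + (a*b*c + (-1)*a*b*d + a*c*d + a*c^2 + b*c^2 + c^2*d)*h2
    exact (mul_ne_zero (pow_ne_zero 2 (add_ne_zero2 h2 hac))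
      (add_ne_zero2 h2 hbd)) key
  have hxa_d : xa ≠ d := by
    intro h
    rw [hxadef, div_eq_iff hDa] at h
    have key : (a+d)^2*(b+c) = 0 := by
      linear_combination h + ((-1)*a*b*c + a*b*d + a*c*d + a*d^2 + b*d^2 + c*d^2)*h2
    exact (mul_ne_zero (pow_ne_zero 2 (add_ne_zero2 h2 had))
      (add_ne_zero2 h2 hbc)) key
  have hxb_b : xb ≠ b := by
    intro h
    rw [hxbdef, div_eq_iff hDb] at h
    exact hZb (by linear_combination h + b^2*(a+b+c+d)*h2)
  have hxb_a : xb ≠ a := by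
    intro h
    rw [hxbdef, div_eq_iff hDb] at h
    have key : (b+a)^2*(c+d) = 0 := by
      linear_combination h + (a*b*c + a*b*d + a^2*b + a^2*c + a^2*d + (-1)*b*c*d)*h2
    exact (mul_ne_zero (pow_ne_zero 2 (add_ne_zero2 h2 (Ne.symm hab)))
      (add_ne_zero2 h2 hcd)) key
  have hxb_c : xb ≠ c := by
    intro h
    rw [hxbdef, div_eq_iff hDb] at h
    have key : (b+c)^2*(a+d) = 0 := by
      linear_combination h + (a*b*c + (-1)*a*b*d + a*c^2 + b*c*d + b*c^2 + c^2*d)*h2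
    exact (mul_ne_zero (pow_ne_zero 2 (add_ne_zero2 h2 hbc))
      (add_ne_zero2 h2 had)) key
  have hxb_d : xb ≠ d := by
    intro h
    rw [hxbdef, div_eq_iff hDb] at h
    have key : (b+d)^2*(a+c) = 0 := by
      linear_combination h + ((-1)*a*b*c + a*b*d + a*d^2 + b*c*d + b*d^2 + c*d^2)*h2
    exact (mul_ne_zero (pow_ne_zero 2 (add_ne_zero2 h2 hbd))
      (add_ne_zero2 h2 hac)) key
  have hxc_c : xc ≠ c := by
    intro h
    rw [hxcdef, div_eq_iff hDc] at h
    exact hZc (by linear_combination h + c^2*(a+b+c+d)*h2)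
  have hxc_a : xc ≠ a := by
    intro h
    rw [hxcdef, div_eq_iff hDc] at h
    have key : (c+a)^2*(b+d) = 0 := by
      linear_combination h + (a*b*c + a*c*d + a^2*b + a^2*c + a^2*d + (-1)*b*c*d)*h2
    exact (mul_ne_zero (pow_ne_zero 2 (add_ne_zero2 h2 (Ne.symm hac)))
      (add_ne_zero2 h2 hbd)) key
  have hxc_b : xc ≠ b := by
    intro h
    rw [hxcdef, div_eq_iff hDc] at h
    have key : (c+b)^2*(a+d) = 0 := by
      linear_combination h + (a*b*c + a*b^2 + (-1)*a*c*d + b*c*d + b^2*c + b^2*d)*h2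
    exact (mul_ne_zero (pow_ne_zero 2 (add_ne_zero2 h2 (Ne.symm hbc)))
      (add_ne_zero2 h2 had)) key
  have hxc_d : xc ≠ d := by
    intro h
    rw [hxcdef, div_eq_iff hDc] at h
    have key : (c+d)^2*(a+b) = 0 := by
      linear_combination h + ((-1)*a*b*c + a*c*d + a*d^2 + b*c*d + b*d^2 + c*d^2)*h2
    exact (mul_ne_zero (pow_ne_zero 2 (add_ne_zero2 h2 hcd))
      (add_ne_zero2 h2 hab)) key
  have hxd_d : xd ≠ d := by
    intro h
    rw [hxddef, div_eq_iff hDd] at h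
    exact hZd (by linear_combination h + d^2*(a+b+c+d)*h2)
  have hxd_a : xd ≠ a := by
    intro h
    rw [hxddef, div_eq_iff hDd] at h
    have key : (d+a)^2*(b+c) = 0 := by
      linear_combination h + (a*b*d + a*c*d + a^2*b + a^2*c + a^2*d + (-1)*b*c*d)*h2
    exact (mul_ne_zero (pow_ne_zero 2 (add_ne_zero2 h2 (Ne.symm had)))
      (add_ne_zero2 h2 hbc)) key
  have hxd_b : xd ≠ b := by
    intro h
    rw [hxddef, div_eq_iff hDd] at h
    have key : (d+b)^2*(a+c) = 0 := by
      linear_combination h + (a*b*d + a*b^2 + (-1)*a*c*d + b*c*d + b^2*c + b^2*d)*h2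
    exact (mul_ne_zero (pow_ne_zero 2 (add_ne_zero2 h2 (Ne.symm hbd)))
      (add_ne_zero2 h2 hac)) key
  have hxd_c : xd ≠ c := by
    intro h
    rw [hxddef, div_eq_iff hDd] at h
    have key : (d+c)^2*(a+b) = 0 := by
      linear_combination h + ((-1)*a*b*d + a*c*d + a*c^2 + b*c*d + b*c^2 + c^2*d)*h2
    exact (mul_ne_zero (pow_ne_zero 2 (add_ne_zero2 h2 (Ne.symm hcd)))
      (add_ne_zero2 h2 hab)) key
  have hx0_a : x0 ≠ a := by
    intro h
    have hsq : (a*b*c+a*b*d+a*c*d+b*c*d) / (a+b+c+d) = a^2 := by rw [← hx0sq, h]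
    rw [div_eq_iff hs1] at hsq
    exact hZa (by linear_combination hsq + a^2*(a+b+c+d)*h2)
  have hx0_b : x0 ≠ b := by
    intro h
    have hsq : (a*b*c+a*b*d+a*c*d+b*c*d) / (a+b+c+d) = b^2 := by rw [← hx0sq, h]
    rw [div_eq_iff hs1] at hsq
    exact hZb (by linear_combination hsq + b^2*(a+b+c+d)*h2)
  have hx0_c : x0 ≠ c := by
    intro h
    have hsq : (a*b*c+a*b*d+a*c*d+b*c*d) / (a+b+c+d) = c^2 := by rw [← hx0sq, h]
    rw [div_eq_iff hs1] at hsq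
    exact hZc (by linear_combination hsq + c^2*(a+b+c+d)*h2)
  have hx0_d : x0 ≠ d := by
    intro h
    have hsq : (a*b*c+a*b*d+a*c*d+b*c*d) / (a+b+c+d) = d^2 := by rw [← hx0sq, h]
    rw [div_eq_iff hs1] at hsq
    exact hZd (by linear_combination hsq + d^2*(a+b+c+d)*h2)
  have hx0_xa : x0 ≠ xa := by
    intro h
    have hsq : (a*b*c+a*b*d+a*c*d+b*c*d) / (a+b+c+d) = ((a*b*c+a*b*d+a*c*d+b*c*d) + a*(a*b+a*c+a*d+b*c+b*d+c*d))^2 / ((a*b+a*c+a*d+b*c+b*d+c*d) + a*(a+b+c+d))^2 := by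
      rw [← hx0sq, h, hxadef, div_pow]
    rw [div_eq_div_iff hs1 (pow_ne_zero 2 hDa)] at hsq
    have key : ((a*b+a*c+a*d+b*c+b*d+c*d)^2 + (a+b+c+d)*(a*b*c+a*b*d+a*c*d+b*c*d))*((a*b*c+a*b*d+a*c*d+b*c*d) + a^2*(a+b+c+d)) = 0 := by
      linear_combination hsq + ((2)*a*b*c^2*d^3 + (2)*a*b*c^3*d^2 + (2)*a*b^2*c*d^3 + (7)*a*b^2*c^2*d^2 + (2)*a*b^2*c^3*d + (2)*a*b^3*c*d^2 + (2)*a*b^3*c^2*d + (4)*a^2*b*c*d^3 + (12)*a^2*b*c^2*d^2 + (4)*a^2*b*c^3*d + (12)*a^2*b^2*c*d^2 + (12)*a^2*b^2*c^2*d + (2)*a^2*b^2*c^3 + (2)*a^2*b^2*d^3 + (4)*a^2*b^3*c*d + (2)*a^2*b^3*c^2 + (2)*a^2*b^3*d^2 + (2)*a^2*c^2*d^3 + (2)*a^2*c^3*d^2 + (14)*a^3*b*c*d^2 + (14)*a^3*b*c^2*d + (2)*a^3*b*c^3 + (2)*a^3*b*d^3 + (14)*a^3*b^2*c*d + (6)*a^3*b^2*c^2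 + (6)*a^3*b^2*d^2 + (2)*a^3*b^3*c + (2)*a^3*b^3*d + (2)*a^3*c*d^3 + (6)*a^3*c^2*d^2 + (2)*a^3*c^3*d + (12)*a^4*b*c*d + (5)*a^4*b*c^2 + (5)*a^4*b*d^2 + (5)*a^4*b^2*c + (5)*a^4*b^2*d + a^4*b^3 + (5)*a^4*c*d^2 + (5)*a^4*c^2*d + a^4*c^3 + a^4*d^3 + (2)*a^5*b*c + (2)*a^5*b*d + a^5*b^2 + (2)*a^5*c*d + a^5*c^2 + a^5*d^2 + b^2*c^2*d^3 + b^2*c^3*d^2 + b^3*c^2*d^2)*h2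
    rcases mul_eq_zero.1 key with hk | hk
    · exact hE5 hk
    · exact hZa hk
  have hx0_xb : x0 ≠ xb := by
    intro h
    have hsq : (a*b*c+a*b*d+a*c*d+b*c*d) / (a+b+c+d) = ((a*b*c+a*b*d+a*c*d+b*c*d) + b*(a*b+a*c+a*d+b*c+b*d+c*d))^2 / ((a*b+a*c+a*d+b*c+b*d+c*d) + b*(a+b+c+d))^2 := by
      rw [← hx0sq, h, hxbdef, div_pow]
    rw [div_eq_div_iff hs1 (pow_ne_zero 2 hDb)] at hsq
    have key : ((a*b+a*c+a*d+b*c+b*d+c*d)^2 + (a+b+c+d)*(a*b*c+a*b*d+a*c*d+b*c*d))*((a*b*c+a*b*d+a*c*d+b*c*d) + b^2*(a+b+c+d)) = 0 := by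
      linear_combination hsq + ((2)*a*b*c^2*d^3 + (2)*a*b*c^3*d^2 + (4)*a*b^2*c*d^3 + (12)*a*b^2*c^2*d^2 + (4)*a*b^2*c^3*d + (14)*a*b^3*c*d^2 + (14)*a*b^3*c^2*d + (2)*a*b^3*c^3 + (2)*a*b^3*d^3 + (12)*a*b^4*c*d + (5)*a*b^4*c^2 + (5)*a*b^4*d^2 + (2)*a*b^5*c + (2)*a*b^5*d + (2)*a^2*b*c*d^3 + (7)*a^2*b*c^2*d^2 + (2)*a^2*b*c^3*d + (12)*a^2*b^2*c*d^2 + (12)*a^2*b^2*c^2*d + (2)*a^2*b^2*c^3 + (2)*a^2*b^2*d^3 + (14)*a^2*b^3*c*d + (6)*a^2*b^3*c^2 + (6)*a^2*b^3*d^2 + (5)*a^2*b^4*c + (5)*a^2*b^4*d + a^2*b^5 + a^2*c^2*d^3 + a^2*c^3*d^2 + (2)*a^3*b*c*d^2 + (2)*a^3*b*c^2*d + (4)*a^3*b^2*c*d + (2)*a^3*b^2*c^2 + (2)*a^3*b^2*d^2 + (2)*a^3*b^3*c + (2)*a^3*b^3*d + a^3*b^4 + a^3*c^2*d^2 + (2)*b^2*c^2*d^3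 + (2)*b^2*c^3*d^2 + (2)*b^3*c*d^3 + (6)*b^3*c^2*d^2 + (2)*b^3*c^3*d + (5)*b^4*c*d^2 + (5)*b^4*c^2*d + b^4*c^3 + b^4*d^3 + (2)*b^5*c*d + b^5*c^2 + b^5*d^2)*h2
    rcases mul_eq_zero.1 key with hk | hk
    · exact hE5 hk
    · exact hZb hk
  have hx0_xc : x0 ≠ xc := by
    intro h
    have hsq : (a*b*c+a*b*d+a*c*d+b*c*d) / (a+b+c+d) = ((a*b*c+a*b*d+a*c*d+b*c*d) + c*(a*b+a*c+a*d+b*c+b*d+c*d))^2 / ((a*b+a*c+a*d+b*c+b*d+c*d) + c*(a+b+c+d))^2 := by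
      rw [← hx0sq, h, hxcdef, div_pow]
    rw [div_eq_div_iff hs1 (pow_ne_zero 2 hDc)] at hsq
    have key : ((a*b+a*c+a*d+b*c+b*d+c*d)^2 + (a+b+c+d)*(a*b*c+a*b*d+a*c*d+b*c*d))*((a*b*c+a*b*d+a*c*d+b*c*d) + c^2*(a+b+c+d)) = 0 := by
      linear_combination hsq + ((4)*a*b*c^2*d^3 + (14)*a*b*c^3*d^2 + (12)*a*b*c^4*d + (2)*a*b*c^5 + (2)*a*b^2*c*d^3 + (12)*a*b^2*c^2*d^2 + (14)*a*b^2*c^3*d + (5)*a*b^2*c^4 + (2)*a*b^3*c*d^2 + (4)*a*b^3*c^2*d + (2)*a*b^3*c^3 + (2)*a*c^3*d^3 + (5)*a*c^4*d^2 + (2)*a*c^5*d + (2)*a^2*b*c*d^3 + (12)*a^2*b*c^2*d^2 + (14)*a^2*b*c^3*d + (5)*a^2*b*c^4 + (7)*a^2*b^2*c*d^2 + (12)*a^2*b^2*c^2*d + (6)*a^2*b^2*c^3 + a^2*b^2*d^3 + (2)*a^2*b^3*c*d + (2)*a^2*b^3*c^2 + a^2*b^3*d^2 + (2)*a^2*c^2*d^3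 + (6)*a^2*c^3*d^2 + (5)*a^2*c^4*d + a^2*c^5 + (2)*a^3*b*c*d^2 + (4)*a^3*b*c^2*d + (2)*a^3*b*c^3 + (2)*a^3*b^2*c*d + (2)*a^3*b^2*c^2 + a^3*b^2*d^2 + (2)*a^3*c^2*d^2 + (2)*a^3*c^3*d + a^3*c^4 + (2)*b*c^3*d^3 + (5)*b*c^4*d^2 + (2)*b*c^5*d + (2)*b^2*c^2*d^3 + (6)*b^2*c^3*d^2 + (5)*b^2*c^4*d + b^2*c^5 + (2)*b^3*c^2*d^2 + (2)*b^3*c^3*d + b^3*c^4 + c^4*d^3 + c^5*d^2)*h2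
    rcases mul_eq_zero.1 key with hk | hk
    · exact hE5 hk
    · exact hZc hk
  have hx0_xd : x0 ≠ xd := by
    intro h
    have hsq : (a*b*c+a*b*d+a*c*d+b*c*d) / (a+b+c+d) = ((a*b*c+a*b*d+a*c*d+b*c*d) + d*(a*b+a*c+a*d+b*c+b*d+c*d))^2 / ((a*b+a*c+a*d+b*c+b*d+c*d) + d*(a+b+c+d))^2 := by
      rw [← hx0sq, h, hxddef, div_pow]
    rw [div_eq_div_iff hs1 (pow_ne_zero 2 hDd)] at hsq
    have key : ((a*b+a*c+a*d+b*c+b*d+c*d)^2 + (a+b+c+d)*(a*b*c+a*b*d+a*c*d+b*c*d))*((a*b*c+a*b*d+a*c*d+b*c*d) + d^2*(a+b+c+d)) = 0 := by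
      linear_combination hsq + ((12)*a*b*c*d^4 + (14)*a*b*c^2*d^3 + (4)*a*b*c^3*d^2 + (2)*a*b*d^5 + (14)*a*b^2*c*d^3 + (12)*a*b^2*c^2*d^2 + (2)*a*b^2*c^3*d + (5)*a*b^2*d^4 + (4)*a*b^3*c*d^2 + (2)*a*b^3*c^2*d + (2)*a*b^3*d^3 + (2)*a*c*d^5 + (5)*a*c^2*d^4 + (2)*a*c^3*d^3 + (14)*a^2*b*c*d^3 + (12)*a^2*b*c^2*d^2 + (2)*a^2*b*c^3*d + (5)*a^2*b*d^4 + (12)*a^2*b^2*c*d^2 + (7)*a^2*b^2*c^2*d + a^2*b^2*c^3 + (6)*a^2*b^2*d^3 + (2)*a^2*b^3*c*d + a^2*b^3*c^2 + (2)*a^2*b^3*d^2 + (5)*a^2*c*d^4 + (6)*a^2*c^2*d^3 + (2)*a^2*c^3*d^2 + a^2*d^5 + (4)*a^3*b*c*d^2 + (2)*a^3*b*c^2*d + (2)*a^3*b*d^3 + (2)*a^3*b^2*c*d + a^3*b^2*c^2 + (2)*a^3*b^2*d^2 + (2)*a^3*c*d^3 + (2)*a^3*c^2*d^2 + a^3*d^4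 + (2)*b*c*d^5 + (5)*b*c^2*d^4 + (2)*b*c^3*d^3 + (5)*b^2*c*d^4 + (6)*b^2*c^2*d^3 + (2)*b^2*c^3*d^2 + b^2*d^5 + (2)*b^3*c*d^3 + (2)*b^3*c^2*d^2 + b^3*d^4 + c^2*d^5 + c^3*d^4)*h2
    rcases mul_eq_zero.1 key with hk | hk
    · exact hE5 hk
    · exact hZd hk
  have hxa_xb : xa ≠ xb := by
    intro h
    rw [hxadef, hxbdef, div_eq_div_iff hDa hDb] at h
    have key : (a+b)*((a*b+a*c+a*d+b*c+b*d+c*d)^2 + (a+b+c+d)*(a*b*c+a*b*d+a*c*d+b*c*d)) = 0 := by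
      linear_combination h + ((3)*a*b*c*d^2 + (3)*a*b*c^2*d + (7)*a*b^2*c*d + (2)*a*b^2*c^2 + (2)*a*b^2*d^2 + (2)*a*b^3*c + (2)*a*b^3*d + (6)*a^2*b*c*d + (2)*a^2*b*c^2 + (2)*a^2*b*d^2 + (3)*a^2*b^2*c + (3)*a^2*b^2*d + a^2*b^3 + a^2*c*d^2 + a^2*c^2*d + a^3*b*c + a^3*b*d + a^3*c*d + b*c^2*d^2 + (2)*b^2*c*d^2 + (2)*b^2*c^2*d + (2)*b^3*c*d + b^3*c^2 + b^3*d^2)*h2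
    rcases mul_eq_zero.1 key with hk | hk
    · exact (add_ne_zero2 h2 hab) hk
    · exact hE5 hk
  have hxa_xc : xa ≠ xc := by
    intro h
    rw [hxadef, hxcdef, div_eq_div_iff hDa hDc] at h
    have key : (a+c)*((a*b+a*c+a*d+b*c+b*d+c*d)^2 + (a+b+c+d)*(a*b*c+a*b*d+a*c*d+b*c*d)) = 0 := by
      linear_combination h + ((3)*a*b*c*d^2 + (7)*a*b*c^2*d + (2)*a*b*c^3 + (3)*a*b^2*c*d + (2)*a*b^2*c^2 + (2)*a*c^2*d^2 + (2)*a*c^3*d + (6)*a^2*b*c*d + (3)*a^2*b*c^2 + a^2*b*d^2 + (2)*a^2*b^2*c + a^2*b^2*d + (2)*a^2*c*d^2 + (3)*a^2*c^2*d + a^2*c^3 + a^3*b*c + a^3*b*d + a^3*c*d + (2)*b*c^2*d^2 + (2)*b*c^3*d + b^2*c*d^2 + (2)*b^2*c^2*d + b^2*c^3 + c^3*d^2)*h2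
    rcases mul_eq_zero.1 key with hk | hk
    · exact (add_ne_zero2 h2 hac) hk
    · exact hE5 hk
  have hxa_xd : xa ≠ xd := by
    intro h
    rw [hxadef, hxddef, div_eq_div_iff hDa hDd] at h
    have key : (a+d)*((a*b+a*c+a*d+b*c+b*d+c*d)^2 + (a+b+c+d)*(a*b*c+a*b*d+a*c*d+b*c*d)) = 0 := by
      linear_combination h + ((7)*a*b*c*d^2 + (3)*a*b*c^2*d + (2)*a*b*d^3 + (3)*a*b^2*c*d + (2)*a*b^2*d^2 + (2)*a*c*d^3 + (2)*a*c^2*d^2 + (6)*a^2*b*c*d + a^2*b*c^2 + (3)*a^2*b*d^2 + a^2*b^2*c + (2)*a^2*b^2*d + (3)*a^2*c*d^2 + (2)*a^2*c^2*d + a^2*d^3 + a^3*b*c + a^3*b*d + a^3*c*d + (2)*b*c*d^3 + (2)*b*c^2*d^2 + (2)*b^2*c*d^2 + b^2*c^2*d + b^2*d^3 + c^2*d^3)*h2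
    rcases mul_eq_zero.1 key with hk | hk
    · exact (add_ne_zero2 h2 had) hk
    · exact hE5 hk
  have hxb_xc : xb ≠ xc := by
    intro h
    rw [hxbdef, hxcdef, div_eq_div_iff hDb hDc] at h
    have key : (b+c)*((a*b+a*c+a*d+b*c+b*d+c*d)^2 + (a+b+c+d)*(a*b*c+a*b*d+a*c*d+b*c*d)) = 0 := by
      linear_combination h + ((3)*a*b*c*d^2 + (7)*a*b*c^2*d + (2)*a*b*c^3 + (6)*a*b^2*c*d + (3)*a*b^2*c^2 + a*b^2*d^2 + a*b^3*c + a*b^3*d + (2)*a*c^2*d^2 + (2)*a*c^3*d + (3)*a^2*b*c*d + (2)*a^2*b*c^2 + (2)*a^2*b^2*c + a^2*b^2*d + a^2*c*d^2 + (2)*a^2*c^2*d + a^2*c^3 + (2)*b*c^2*d^2 + (2)*b*c^3*d + (2)*b^2*c*d^2 + (3)*b^2*c^2*d + b^2*c^3 + b^3*c*d + c^3*d^2)*h2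
    rcases mul_eq_zero.1 key with hk | hk
    · exact (add_ne_zero2 h2 hbc) hk
    · exact hE5 hk
  have hxb_xd : xb ≠ xd := by
    intro h
    rw [hxbdef, hxddef, div_eq_div_iff hDb hDd] at h
    have key : (b+d)*((a*b+a*c+a*d+b*c+b*d+c*d)^2 + (a+b+c+d)*(a*b*c+a*b*d+a*c*d+b*c*d)) = 0 := by
      linear_combination h + ((7)*a*b*c*d^2 + (3)*a*b*c^2*d + (2)*a*b*d^3 + (6)*a*b^2*c*d + a*b^2*c^2 + (3)*a*b^2*d^2 + a*b^3*c + a*b^3*d + (2)*a*c*d^3 + (2)*a*c^2*d^2 + (3)*a^2*b*c*d + (2)*a^2*b*d^2 + a^2*b^2*c + (2)*a^2*b^2*d + (2)*a^2*c*d^2 + a^2*c^2*d + a^2*d^3 + (2)*b*c*d^3 + (2)*b*c^2*d^2 + (3)*b^2*c*d^2 + (2)*b^2*c^2*d + b^2*d^3 + b^3*c*d + c^2*d^3)*h2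
    rcases mul_eq_zero.1 key with hk | hk
    · exact (add_ne_zero2 h2 hbd) hk
    · exact hE5 hk
  have hxc_xd : xc ≠ xd := by
    intro h
    rw [hxcdef, hxddef, div_eq_div_iff hDc hDd] at h
    have key : (c+d)*((a*b+a*c+a*d+b*c+b*d+c*d)^2 + (a+b+c+d)*(a*b*c+a*b*d+a*c*d+b*c*d)) = 0 := by
      linear_combination h + ((7)*a*b*c*d^2 + (6)*a*b*c^2*d + a*b*c^3 + (2)*a*b*d^3 + (3)*a*b^2*c*d + a*b^2*c^2 + (2)*a*b^2*d^2 + (2)*a*c*d^3 + (3)*a*c^2*d^2 + a*c^3*d + (3)*a^2*b*c*d + a^2*b*c^2 + (2)*a^2*b*d^2 + a^2*b^2*d + (2)*a^2*c*d^2 + (2)*a^2*c^2*d + a^2*d^3 + (2)*b*c*d^3 + (3)*b*c^2*d^2 + b*c^3*d + (2)*b^2*c*d^2 + (2)*b^2*c^2*d + b^2*d^3 + c^2*d^3)*h2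
    rcases mul_eq_zero.1 key with hk | hk
    · exact (add_ne_zero2 h2 hcd) hk
    · exact hE5 hk
  have hx0E : x0 ∉ insert a ({b,c,d} : Finset (GaloisField 2 (2*m))) := by
    simp [hx0_a, hx0_b, hx0_c, hx0_d]
  have hxaE : xa ∉ insert a ({b,c,d} : Finset (GaloisField 2 (2*m))) := by
    simp [hxa_a, hxa_b, hxa_c, hxa_d]
  have hxbE : xb ∉ insert a ({b,c,d} : Finset (GaloisField 2 (2*m))) := by
    simp [hxb_a, hxb_b, hxb_c, hxb_d]
  have hxcE : xc ∉ insert a ({b,c,d} : Finset (GaloisField 2 (2*m))) := by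
    simp [hxc_a, hxc_b, hxc_c, hxc_d]
  have hxdE : xd ∉ insert a ({b,c,d} : Finset (GaloisField 2 (2*m))) := by
    simp [hxd_a, hxd_b, hxd_c, hxd_d]
  have hset : {B : Finset (GaloisField 2 (2*m)) |
        ↑B ⊆ rootsSet (GaloisField 2 (2*m)) (2 ^ m + 1) ∧ B.card = 5 ∧
          (∃ a ∈ B, esym (B.image (fun b => b - a)) 3 = 0) ∧
            insert a ({b,c,d} : Finset (GaloisField 2 (2*m))) ⊆ B}
      = (↑({insert x0 (insert a ({b,c,d} : Finset (GaloisField 2 (2*m)))), insert xa (insert a ({b,c,d} : Finset (GaloisField 2 (2*m)))), insert xb (insert a ({b,c,d} : Finset (GaloisField 2 (2*m)))), insert xc (insert a ({b,c,d} : Finset (GaloisField 2 (2*m)))), insert xd (insert a ({b,c,d} : Finset (GaloisField 2 (2*m))))} : Finset (Finset (GaloisField 2 (2*m)))) :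
          Set (Finset (GaloisField 2 (2*m)))) := by
    ext B
    simp only [Set.mem_setOf_eq, Finset.coe_insert, Set.mem_insert_iff, Finset.coe_singleton,
      Set.mem_singleton_iff]
    constructor
    · rintro ⟨hBU, hB5, ⟨t, htB, ht⟩, hEB⟩
      have hsd : (B \ insert a ({b,c,d} : Finset (GaloisField 2 (2*m)))).card = 1 := by
        rw [Finset.card_sdiff_of_subset hEB, hB5, hE]
      obtain ⟨x, hxeq⟩ := Finset.card_eq_one.1 hsd
      have hBeq : B = insert x (insert a ({b,c,d} : Finset (GaloisField 2 (2*m)))) := by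
        have hu := Finset.union_sdiff_of_subset hEB
        rw [hxeq] at hu
        rw [← hu, Finset.union_comm, ← Finset.insert_eq]
      have hxE : x ∉ insert a ({b,c,d} : Finset (GaloisField 2 (2*m))) := by
        have : x ∈ B \ insert a ({b,c,d} : Finset (GaloisField 2 (2*m))) := by
          rw [hxeq]; exact Finset.mem_singleton_self x
        exact (Finset.mem_sdiff.1 this).2
      have hxa : x ≠ a := fun h => hxE (by simp [h])
      have hxb : x ≠ b := fun h => hxE (by simp [h])
      have hxc : x ≠ c := fun h => hxE (by simp [h])
      have hxd : x ≠ d := fun h => hxE (by simp [h])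
      have hxU : x^(2^m+1) = 1 := hBU (by rw [hBeq]; simp)
      rw [hBeq] at htB ht
      rw [cond_eval h2 t hxa hxb hxc hxd hab hac had hbc hbd hcd] at ht
      rcases Finset.mem_insert.1 htB with heqt | htB'
      · -- t = x
        rw [heqt] at ht
        have hxx : x^2 * (a+b+c+d) = (a*b*c+a*b*d+a*c*d+b*c*d) := by
          linear_combination ht - ((a*b*c+a*b*d+a*c*d+b*c*d) + x*(a*b+a*c+a*d+b*c+b*d+c*d))*h2
        have hsq : x^2 = x0^2 := by
          rw [hx0sq, eq_div_iff hs1]; exact hxx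
        exact Or.inl (by rw [hBeq, eq_of_sq_eq_sq2 h2 hsq])
      rcases Finset.mem_insert.1 htB' with heqt | htB1
      · -- t = a
        rw [heqt] at ht
        have hxx : x * ((a*b+a*c+a*d+b*c+b*d+c*d) + a*(a+b+c+d)) = ((a*b*c+a*b*d+a*c*d+b*c*d) + a*(a*b+a*c+a*d+b*c+b*d+c*d)) := by
          linear_combination ht - (((a*b*c+a*b*d+a*c*d+b*c*d) + a*(a*b+a*c+a*d+b*c+b*d+c*d)))*h2
        have hxeq2 : x = xa := by rw [hxadef, eq_div_iff hDa]; exact hxx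
        exact Or.inr (Or.inl (by rw [hBeq, hxeq2]))
      rcases Finset.mem_insert.1 htB1 with heqt | htB2
      · -- t = b
        rw [heqt] at ht
        have hxx : x * ((a*b+a*c+a*d+b*c+b*d+c*d) + b*(a+b+c+d)) = ((a*b*c+a*b*d+a*c*d+b*c*d) + b*(a*b+a*c+a*d+b*c+b*d+c*d)) := by
          linear_combination ht - (((a*b*c+a*b*d+a*c*d+b*c*d) + b*(a*b+a*c+a*d+b*c+b*d+c*d)))*h2
        have hxeq2 : x = xb := by rw [hxbdef, eq_div_iff hDb]; exact hxx
        exact Or.inr (Or.inr (Or.inl (by rw [hBeq, hxeq2])))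
      rcases Finset.mem_insert.1 htB2 with heqt | htB3
      · -- t = c
        rw [heqt] at ht
        have hxx : x * ((a*b+a*c+a*d+b*c+b*d+c*d) + c*(a+b+c+d)) = ((a*b*c+a*b*d+a*c*d+b*c*d) + c*(a*b+a*c+a*d+b*c+b*d+c*d)) := by
          linear_combination ht - (((a*b*c+a*b*d+a*c*d+b*c*d) + c*(a*b+a*c+a*d+b*c+b*d+c*d)))*h2
        have hxeq2 : x = xc := by rw [hxcdef, eq_div_iff hDc]; exact hxx
        exact Or.inr (Or.inr (Or.inr (Or.inl (by rw [hBeq, hxeq2]))))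
      have hteq := Finset.mem_singleton.1 htB3
      rw [hteq] at ht
      have hxx : x * ((a*b+a*c+a*d+b*c+b*d+c*d) + d*(a+b+c+d)) = ((a*b*c+a*b*d+a*c*d+b*c*d) + d*(a*b+a*c+a*d+b*c+b*d+c*d)) := by
        linear_combination ht - (((a*b*c+a*b*d+a*c*d+b*c*d) + d*(a*b+a*c+a*d+b*c+b*d+c*d)))*h2
      have hxeq2 : x = xd := by rw [hxddef, eq_div_iff hDd]; exact hxx
      exact Or.inr (Or.inr (Or.inr (Or.inr (by rw [hBeq, hxeq2]))))
    · rintro (rfl | rfl | rfl | rfl | rfl)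
      · refine ⟨?_, ?_, ⟨x0, by simp, ?_⟩, Finset.subset_insert _ _⟩
        · intro u hu
          rcases Finset.mem_insert.1 (Finset.mem_coe.1 hu) with rfl | hu'
          · exact hx0U
          · exact hEU hu'
        · rw [Finset.card_insert_of_notMem hx0E, hE]
        · rw [cond_eval h2 x0 hx0_a hx0_b hx0_c hx0_d hab hac had hbc hbd hcd]
          linear_combination hx0s1 + ((a*b*c+a*b*d+a*c*d+b*c*d) + x0*(a*b+a*c+a*d+b*c+b*d+c*d))*h2
      · refine ⟨?_, ?_, ⟨a, by simp, ?_⟩, Finset.subset_insert _ _⟩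
        · intro u hu
          rcases Finset.mem_insert.1 (Finset.mem_coe.1 hu) with rfl | hu'
          · exact hxaU
          · exact hEU hu'
        · rw [Finset.card_insert_of_notMem hxaE, hE]
        · rw [cond_eval h2 a hxa_a hxa_b hxa_c hxa_d hab hac had hbc hbd hcd]
          linear_combination hxamul + (((a*b*c+a*b*d+a*c*d+b*c*d) + a*(a*b+a*c+a*d+b*c+b*d+c*d)))*h2
      · refine ⟨?_, ?_, ⟨b, by simp, ?_⟩, Finset.subset_insert _ _⟩
        · intro u hu
          rcases Finset.mem_insert.1 (Finset.mem_coe.1 hu) with rfl | hu'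
          · exact hxbU
          · exact hEU hu'
        · rw [Finset.card_insert_of_notMem hxbE, hE]
        · rw [cond_eval h2 b hxb_a hxb_b hxb_c hxb_d hab hac had hbc hbd hcd]
          linear_combination hxbmul + (((a*b*c+a*b*d+a*c*d+b*c*d) + b*(a*b+a*c+a*d+b*c+b*d+c*d)))*h2
      · refine ⟨?_, ?_, ⟨c, by simp, ?_⟩, Finset.subset_insert _ _⟩
        · intro u hu
          rcases Finset.mem_insert.1 (Finset.mem_coe.1 hu) with rfl | hu'
          · exact hxcU
          · exact hEU hu'
        · rw [Finset.card_insert_of_notMem hxcE, hE]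
        · rw [cond_eval h2 c hxc_a hxc_b hxc_c hxc_d hab hac had hbc hbd hcd]
          linear_combination hxcmul + (((a*b*c+a*b*d+a*c*d+b*c*d) + c*(a*b+a*c+a*d+b*c+b*d+c*d)))*h2
      · refine ⟨?_, ?_, ⟨d, by simp, ?_⟩, Finset.subset_insert _ _⟩
        · intro u hu
          rcases Finset.mem_insert.1 (Finset.mem_coe.1 hu) with rfl | hu'
          · exact hxdU
          · exact hEU hu'
        · rw [Finset.card_insert_of_notMem hxdE, hE]
        · rw [cond_eval h2 d hxd_a hxd_b hxd_c hxd_d hab hac had hbc hbd hcd]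
          linear_combination hxdmul + (((a*b*c+a*b*d+a*c*d+b*c*d) + d*(a*b+a*c+a*d+b*c+b*d+c*d)))*h2
  have hne01 : ∀ (u v : GaloisField 2 (2*m)), u ∉ insert a ({b,c,d} : Finset (GaloisField 2 (2*m))) → u ≠ v →
      insert u (insert a ({b,c,d} : Finset (GaloisField 2 (2*m)))) ≠
        insert v (insert a ({b,c,d} : Finset (GaloisField 2 (2*m)))) :=
    fun u v hu huv => insert_ne_insert hu huv
  rw [hset, Set.ncard_coe_finset]
  rw [Finset.card_insert_of_notMem (by
    simp only [Finset.mem_insert, Finset.mem_singleton]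
    push_neg
    exact ⟨hne01 _ _ hx0E hx0_xa, hne01 _ _ hx0E hx0_xb, hne01 _ _ hx0E hx0_xc,
      hne01 _ _ hx0E hx0_xd⟩)]
  rw [Finset.card_insert_of_notMem (by
    simp only [Finset.mem_insert, Finset.mem_singleton]
    push_neg
    exact ⟨hne01 _ _ hxaE hxa_xb, hne01 _ _ hxaE hxa_xc, hne01 _ _ hxaE hxa_xd⟩)]
  rw [Finset.card_insert_of_notMem (by
    simp only [Finset.mem_insert, Finset.mem_singleton]
    push_neg
    exact ⟨hne01 _ _ hxbE hxb_xc, hne01 _ _ hxbE hxb_xd⟩)]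
  rw [Finset.card_insert_of_notMem (by
    simp only [Finset.mem_singleton]
    exact hne01 _ _ hxcE hxc_xd)]
  rw [Finset.card_singleton]
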